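/- Let B : [0,∞) → [0,∞) be convex, C¹, with B′ > 0, and let v*, V* : [0,∞) → [0,∞) be nonincreasing C¹ functions. Define Z(s) = ∫_0^s (v*(τ) − V*(τ)) dτ and Y(s) = ∫_0^s (B(v*(τ)) − B(V*(τ))) dτ. If Z attains its maximum over [0,∞) at s = 0 (i.e. Z(s) ≤ Z(0) = 0 for all s), then Y(s) ≤ 0 for all s ≥ 0. -/

import Mathlib

open Set intervalIntegral MeasureTheory


/-- Core lemma: if `g` is a continuous nonnegative antitone weight on `[0,s]`, `h` is
continuous on `[0,s]`, and all partial integrals of `h` from `0` are nonpositive, then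
`∫_0^s g·h ≤ 0`.  Proved by a layer-cake (Fubini) argument. -/
lemma key_weight (s : ℝ) (hs : 0 ≤ s) (g h : ℝ → ℝ)
    (hgc : ContinuousOn g (Icc 0 s)) (hgm : AntitoneOn g (Icc 0 s))
    (hgnn : ∀ τ ∈ Icc (0:ℝ) s, 0 ≤ g τ)
    (hhc : ContinuousOn h (Icc 0 s))
    (hZ : ∀ u ∈ Icc (0:ℝ) s, ∫ t in (0:ℝ)..u, h t ≤ 0) :
    ∫ τ in (0:ℝ)..s, g τ * h τ ≤ 0 := by
  -- the clamping map onto `[0,s]`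
  set e : ℝ → ℝ := fun τ => max 0 (min τ s) with he
  have he_cont : Continuous e := continuous_const.max (continuous_id.min continuous_const)
  have he_mem : ∀ τ, e τ ∈ Icc (0:ℝ) s := fun τ =>
    ⟨le_max_left _ _, max_le hs (min_le_right _ _)⟩
  have he_eq : ∀ τ ∈ Icc (0:ℝ) s, e τ = τ := by
    intro τ hτ
    simp only [he, min_eq_left hτ.2, max_eq_right hτ.1]
  have he_mono : Monotone e := fun a b hab =>
    max_le_max le_rfl (min_le_min hab le_rfl)
  have he0 : e 0 = 0 := by simp only [he, min_eq_left hs, max_self]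
  set G : ℝ → ℝ := fun τ => g (e τ) - g s with hG
  set H : ℝ → ℝ := fun τ => h (e τ) with hH
  have hGc : Continuous G :=
    (hgc.comp_continuous he_cont he_mem).sub continuous_const
  have hHc : Continuous H := hhc.comp_continuous he_cont he_mem
  have hsmem : s ∈ Icc (0:ℝ) s := ⟨hs, le_rfl⟩
  have hGnn : ∀ τ, 0 ≤ G τ := fun τ =>
    sub_nonneg.2 (hgm (he_mem τ) hsmem (he_mem τ).2)
  have hGanti : Antitone G := fun a b hab =>
    sub_le_sub_right (hgm (he_mem a) (he_mem b) (he_mono hab)) _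
  set M : ℝ := G 0 with hM
  have hGleM : ∀ τ, G τ ≤ M := by
    intro τ
    refine sub_le_sub_right (hgm (by rw [he0]; exact ⟨le_rfl, hs⟩) (he_mem τ) ?_) _
    rw [he0]; exact (he_mem τ).1
  have hMnn : 0 ≤ M := hGnn 0
  obtain ⟨C, hC⟩ : ∃ C, ∀ x ∈ Icc (0:ℝ) s, ‖h x‖ ≤ C :=
    isCompact_Icc.exists_bound_of_continuousOn hhc
  have hHbd : ∀ τ, ‖H τ‖ ≤ C := fun τ => hC _ (he_mem τ)
  haveI : IsFiniteMeasure (volume.restrict (Ioc (0:ℝ) s)) :=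
    ⟨by rw [Measure.restrict_apply_univ, Real.volume_Ioc]; exact ENNReal.ofReal_lt_top⟩
  haveI : IsFiniteMeasure (volume.restrict (Ioc (0:ℝ) M)) :=
    ⟨by rw [Measure.restrict_apply_univ, Real.volume_Ioc]; exact ENNReal.ofReal_lt_top⟩
  set F : ℝ → ℝ → ℝ := fun τ t => if t < G τ then H τ else 0 with hF
  -- inner integral in `t`
  have claim1 : ∀ τ, ∫ t in Ioc (0:ℝ) M, F τ t = G τ * H τ := by
    intro τ
    have h1 : (fun t => F τ t) = (Iio (G τ)).indicator (fun _ => H τ) := by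
      funext t; simp [hF, indicator_apply, mem_Iio]
    rw [h1, setIntegral_indicator measurableSet_Iio]
    have hinter : Ioc (0:ℝ) M ∩ Iio (G τ) = Ioo 0 (G τ) := by
      ext t
      constructor
      · rintro ⟨⟨h1', _⟩, h2⟩; exact ⟨h1', h2⟩
      · rintro ⟨h1', h2⟩; exact ⟨⟨h1', (le_of_lt h2).trans (hGleM τ)⟩, h2⟩
    rw [hinter, setIntegral_const, Real.volume_real_Ioo_of_le (hGnn τ), smul_eq_mul, sub_zero]
  -- inner integral in `τ`
  have claim2 : ∀ t : ℝ, 0 < t → ∫ τ in Ioc (0:ℝ) s, F τ t ≤ 0 := by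
    intro t ht
    have hopen : IsOpen {τ' : ℝ | t < G τ'} := isOpen_lt continuous_const hGc
    have h1 : (fun τ => F τ t) = ({τ' : ℝ | t < G τ'}).indicator H := by
      funext τ; simp [hF, indicator_apply, mem_setOf_eq]
    rw [h1, setIntegral_indicator hopen.measurableSet]
    set A := Ioc (0:ℝ) s ∩ {τ' : ℝ | t < G τ'} with hA
    rcases A.eq_empty_or_nonempty with hAe | hAne
    · rw [hAe]; simp
    · set ξ := sSup A with hξ
      have hbdd : BddAbove A := ⟨s, fun x hx => hx.1.2⟩
      have hξs : ξ ≤ s := csSup_le hAne fun x hx => hx.1.2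
      obtain ⟨τ₀, hτ₀⟩ := hAne
      have hξ0 : 0 ≤ ξ := le_trans (le_of_lt hτ₀.1.1) (le_csSup hbdd hτ₀)
      have hsub1 : Ioo 0 ξ ⊆ A := by
        intro τ hτ
        obtain ⟨σ, hσA, hτσ⟩ := exists_lt_of_lt_csSup ⟨τ₀, hτ₀⟩ hτ.2
        exact ⟨⟨hτ.1, hτσ.le.trans hσA.1.2⟩, lt_of_lt_of_le hσA.2 (hGanti hτσ.le)⟩
      have hsub2 : A ⊆ Ioc 0 ξ := fun x hx => ⟨hx.1.1, le_csSup hbdd hx⟩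
      have haeq : A =ᵐ[volume] Ioc (0:ℝ) ξ := by
        rw [MeasureTheory.ae_eq_set]
        constructor
        · have : A \ Ioc 0 ξ = ∅ := by rw [diff_eq_empty]; exact hsub2
          simp [this]
        · refine measure_mono_null (t := {ξ}) ?_ (measure_singleton ξ)
          intro x hx
          rcases lt_or_eq_of_le hx.1.2 with hlt | heq
          · exact absurd (hsub1 ⟨hx.1.1, hlt⟩) hx.2
          · exact heq
      calc ∫ τ in A, H τ = ∫ τ in Ioc (0:ℝ) ξ, H τ := setIntegral_congr_set haeq
        _ = ∫ τ in Ioc (0:ℝ) ξ, h τ := by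
            refine setIntegral_congr_fun measurableSet_Ioc fun τ hτ => ?_
            simp only [hH]; rw [he_eq τ ⟨le_of_lt hτ.1, hτ.2.trans hξs⟩]
        _ = ∫ τ in (0:ℝ)..ξ, h τ := (intervalIntegral.integral_of_le hξ0).symm
        _ ≤ 0 := hZ ξ ⟨hξ0, hξs⟩
  -- integrability on the product
  have hS : MeasurableSet {p : ℝ × ℝ | p.2 < G p.1} :=
    (isOpen_lt continuous_snd (hGc.comp continuous_fst)).measurableSet
  have hFmeas : StronglyMeasurable (Function.uncurry F) := by
    have h1 : Function.uncurry F
        = ({p : ℝ × ℝ | p.2 < G p.1}).indicator (fun p => H p.1) := by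
      funext p; simp [Function.uncurry, hF, indicator_apply, mem_setOf_eq]
    rw [h1]
    exact ((hHc.comp continuous_fst).stronglyMeasurable).indicator hS
  have hFint : Integrable (Function.uncurry F)
      ((volume.restrict (Ioc (0:ℝ) s)).prod (volume.restrict (Ioc (0:ℝ) M))) := by
    refine Integrable.mono' (integrable_const (max C 0)) hFmeas.aestronglyMeasurable ?_
    refine Filter.Eventually.of_forall fun p => ?_
    simp only [Function.uncurry, hF]
    split
    · exact (hHbd p.1).trans (le_max_left _ _)
    · simp
  -- the main term
  have main : ∫ τ in Ioc (0:ℝ) s, G τ * H τ ≤ 0 := by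
    have h1 : ∫ τ in Ioc (0:ℝ) s, G τ * H τ
        = ∫ τ in Ioc (0:ℝ) s, ∫ t in Ioc (0:ℝ) M, F τ t := by
      simp_rw [claim1]
    rw [h1, MeasureTheory.integral_integral_swap hFint]
    refine integral_nonpos_of_ae ?_
    filter_upwards [ae_restrict_mem measurableSet_Ioc] with t ht
    exact claim2 t ht.1
  -- assemble
  have hG_int : IntegrableOn (fun τ => G τ * H τ) (Ioc (0:ℝ) s) :=
    (hGc.mul hHc).integrableOn_Ioc
  have hH_int : IntegrableOn H (Ioc (0:ℝ) s) := hHc.integrableOn_Ioc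
  have hZs : ∫ τ in Ioc (0:ℝ) s, H τ ≤ 0 := by
    have h1 : ∫ τ in Ioc (0:ℝ) s, H τ = ∫ τ in (0:ℝ)..s, h τ := by
      rw [intervalIntegral.integral_of_le hs]
      exact setIntegral_congr_fun measurableSet_Ioc fun τ hτ => by
        simp only [hH]; rw [he_eq τ (Ioc_subset_Icc_self hτ)]
    rw [h1]; exact hZ s hsmem
  have h2 : ∫ τ in Ioc (0:ℝ) s, g s * H τ ≤ 0 := by
    rw [MeasureTheory.integral_const_mul]
    exact mul_nonpos_of_nonneg_of_nonpos (hgnn s hsmem) hZs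
  calc ∫ τ in (0:ℝ)..s, g τ * h τ
      = ∫ τ in Ioc (0:ℝ) s, g τ * h τ := intervalIntegral.integral_of_le hs
    _ = ∫ τ in Ioc (0:ℝ) s, (G τ * H τ + g s * H τ) := by
        refine setIntegral_congr_fun measurableSet_Ioc fun τ hτ => ?_
        simp only [hG, hH, he_eq τ (Ioc_subset_Icc_self hτ)]; ring
    _ = (∫ τ in Ioc (0:ℝ) s, G τ * H τ) + ∫ τ in Ioc (0:ℝ) s, g s * H τ :=
        MeasureTheory.integral_add hG_int (hH_int.const_mul _)
    _ ≤ 0 := by linarith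

/-- Let `B : [0,∞) → [0,∞)` be convex, `C¹`, with `B′ > 0`, and let `v*, V*` be nonnegative
nonincreasing `C¹` functions. If `Z(s) = ∫_0^s (v* − V*) dτ` satisfies `Z(s) ≤ Z(0) = 0`
for all `s ≥ 0`, then `Y(s) = ∫_0^s (B(v*) − B(V*)) dτ ≤ 0` for all `s ≥ 0`. -/
theorem Y_nonpos_of_Z_nonpos (B B' v v' V V' : ℝ → ℝ)
    (hBconv : ConvexOn ℝ (Ici 0) B)
    (hBnn : ∀ x ∈ Ici (0:ℝ), 0 ≤ B x)
    (hBd : ∀ x ∈ Ici (0:ℝ), HasDerivAt B (B' x) x)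
    (hB'c : ContinuousOn B' (Ici 0))
    (hB'pos : ∀ x ∈ Ici (0:ℝ), 0 < B' x)
    (hvnn : ∀ s, 0 ≤ v s) (hVnn : ∀ s, 0 ≤ V s)
    (hvmono : AntitoneOn v (Ici 0)) (hVmono : AntitoneOn V (Ici 0))
    (hvd : ∀ s ∈ Ici (0:ℝ), HasDerivAt v (v' s) s)
    (hVd : ∀ s ∈ Ici (0:ℝ), HasDerivAt V (V' s) s)
    (hv'c : ContinuousOn v' (Ici 0)) (hV'c : ContinuousOn V' (Ici 0))
    (hZ : ∀ s ∈ Ici (0:ℝ), ∫ t in (0:ℝ)..s, (v t - V t) ≤ 0) :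
    ∀ s ∈ Ici (0:ℝ), ∫ t in (0:ℝ)..s, (B (v t) - B (V t)) ≤ 0 := by
  intro s hs
  rw [mem_Ici] at hs
  -- basic continuity facts
  have hvc : ContinuousOn v (Ici 0) := fun x hx =>
    ((hvd x hx).continuousAt).continuousWithinAt
  have hVc : ContinuousOn V (Ici 0) := fun x hx =>
    ((hVd x hx).continuousAt).continuousWithinAt
  have hBc : ContinuousOn B (Ici 0) := fun x hx =>
    ((hBd x hx).continuousAt).continuousWithinAt
  -- tangent-line inequality for convex `B`
  have tangent : ∀ x ∈ Ici (0:ℝ), ∀ y ∈ Ici (0:ℝ), B x - B y ≤ B' x * (x - y) := by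
    intro x hx y hy
    rcases lt_trichotomy x y with hxy | hxy | hxy
    · have h1 : B' x ≤ slope B x y := hBconv.le_slope_of_hasDerivAt hx hy hxy (hBd x hx)
      rw [slope_def_field] at h1
      have hpos : 0 < y - x := by linarith
      have h2 : B' x * (y - x) ≤ B y - B x := (le_div_iff₀ hpos).mp h1
      nlinarith
    · subst hxy; simp
    · have h1 : slope B y x ≤ B' x := hBconv.slope_le_of_hasDerivAt hy hx hxy (hBd x hx)
      rw [slope_def_field] at h1
      have hpos : 0 < x - y := by linarith
      have h2 : B x - B y ≤ B' x * (x - y) := (div_le_iff₀ hpos).mp h1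
      exact h2
  -- monotonicity of `B'` on `[0,∞)`
  have hB'mono : MonotoneOn B' (Ici 0) := by
    intro x hx y hy hxy
    rcases eq_or_lt_of_le hxy with rfl | hlt
    · exact le_rfl
    · exact (hBconv.le_slope_of_hasDerivAt hx hy hlt (hBd x hx)).trans
        (hBconv.slope_le_of_hasDerivAt hx hy hlt (hBd y hy))
  have hsubset : Icc (0:ℝ) s ⊆ Ici 0 := fun x hx => hx.1
  -- step 1: compare with the tangent-line integral
  have step1 : ∫ t in (0:ℝ)..s, (B (v t) - B (V t))
      ≤ ∫ t in (0:ℝ)..s, B' (v t) * (v t - V t) := by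
    have hint1 : IntervalIntegrable (fun t => B (v t) - B (V t)) volume 0 s := by
      apply ContinuousOn.intervalIntegrable
      rw [uIcc_of_le hs]
      exact ((hBc.comp (hvc.mono hsubset) fun t ht => hvnn t).sub
        (hBc.comp (hVc.mono hsubset) fun t ht => hVnn t))
    have hint2 : IntervalIntegrable (fun t => B' (v t) * (v t - V t)) volume 0 s := by
      apply ContinuousOn.intervalIntegrable
      rw [uIcc_of_le hs]
      exact (hB'c.comp (hvc.mono hsubset) fun t ht => hvnn t).mul
        ((hvc.mono hsubset).sub (hVc.mono hsubset))
    refine intervalIntegral.integral_mono_on hs hint1 hint2 fun t ht => ?_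
    exact tangent (v t) (hvnn t) (V t) (hVnn t)
  -- step 2: apply the key weighted lemma
  have step2 : ∫ t in (0:ℝ)..s, B' (v t) * (v t - V t) ≤ 0 := by
    refine key_weight s hs (fun t => B' (v t)) (fun t => v t - V t)
      (hB'c.comp (hvc.mono hsubset) fun t ht => hvnn t) ?_ (fun t ht => (hB'pos _ (hvnn t)).le)
      ((hvc.mono hsubset).sub (hVc.mono hsubset)) (fun u hu => hZ u hu.1)
    intro a ha b hb hab
    exact hB'mono (hvnn b) (hvnn a) (hvmono ha.1 hb.1 hab)
  linarith
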